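/- Let A, B be positive definite matrices and p ∈ [0,1]. Then 2·max{p,1−p}·(A∇B − A#B) ≥ A∇_p B − A#_p B ≥ 2·min{p,1−p}·(A∇B − A#B) in the Loewner order, where ∇ and # denote the unweighted (ν = 1/2) arithmetic and geometric means. -/

import Mathlib

open Matrix ComplexOrder

/-- Real power of a Hermitian matrix via the spectral theorem (functional calculus);
junk value `0` for non-Hermitian matrices. -/
noncomputable def Matrix.hrpow {n : ℕ} (A : Matrix (Fin n) (Fin n) ℂ) (r : ℝ) :
    Matrix (Fin n) (Fin n) ℂ :=
  if h : A.IsHermitian then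
    (h.eigenvectorUnitary : Matrix (Fin n) (Fin n) ℂ) *
      Matrix.diagonal (fun i => ((h.eigenvalues i ^ r : ℝ) : ℂ)) *
      (h.eigenvectorUnitary : Matrix (Fin n) (Fin n) ℂ)ᴴ
  else 0

/-- Weighted geometric mean `A #_ν B` of positive definite matrices:
`A^{1/2} (A^{-1/2} B A^{-1/2})^ν A^{1/2}`. -/
noncomputable def Matrix.gmean {n : ℕ} (A B : Matrix (Fin n) (Fin n) ℂ) (ν : ℝ) :
    Matrix (Fin n) (Fin n) ℂ :=
  A.hrpow (1/2) * ((A.hrpow (-(1/2)) * B * A.hrpow (-(1/2))).hrpow ν) * A.hrpow (1/2)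

/-- Quadratic weighted geometric mean `X ⓢ_ν Y = X* (|Y X⁻¹|²)^ν X`. -/
noncomputable def Matrix.qgmean {n : ℕ} (X Y : Matrix (Fin n) (Fin n) ℂ) (ν : ℝ) :
    Matrix (Fin n) (Fin n) ℂ :=
  Xᴴ * ((Y * X⁻¹)ᴴ * (Y * X⁻¹)).hrpow ν * X

namespace Aux

variable {n : ℕ} {C : Matrix (Fin n) (Fin n) ℂ}

/-- spectral functional calculus -/
noncomputable def rep (h : C.IsHermitian) (f : Fin n → ℝ) : Matrix (Fin n) (Fin n) ℂ :=
  (h.eigenvectorUnitary : Matrix (Fin n) (Fin n) ℂ) *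
    Matrix.diagonal (fun i => ((f i : ℝ) : ℂ)) *
    (h.eigenvectorUnitary : Matrix (Fin n) (Fin n) ℂ)ᴴ

lemma hrpow_eq (h : C.IsHermitian) (r : ℝ) :
    C.hrpow r = rep h (fun i => h.eigenvalues i ^ r) := dif_pos h

lemma rep_self (h : C.IsHermitian) : C = rep h h.eigenvalues := by
  exact h.spectral_theorem

lemma UU (h : C.IsHermitian) :
    (h.eigenvectorUnitary : Matrix (Fin n) (Fin n) ℂ) *
      (h.eigenvectorUnitary : Matrix (Fin n) (Fin n) ℂ)ᴴ = 1 := by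
  rw [← Matrix.star_eq_conjTranspose]
  exact (Matrix.mem_unitaryGroup_iff).mp h.eigenvectorUnitary.2

lemma UU' (h : C.IsHermitian) :
    (h.eigenvectorUnitary : Matrix (Fin n) (Fin n) ℂ)ᴴ *
      (h.eigenvectorUnitary : Matrix (Fin n) (Fin n) ℂ) = 1 := by
  rw [← Matrix.star_eq_conjTranspose]
  exact (Matrix.mem_unitaryGroup_iff').mp h.eigenvectorUnitary.2

lemma rep_one (h : C.IsHermitian) : rep h (fun _ => 1) = 1 := by
  simp [rep, Matrix.diagonal_one, UU h]

lemma rep_add (h : C.IsHermitian) (f g : Fin n → ℝ) :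
    rep h f + rep h g = rep h (f + g) := by
  have hd : (Matrix.diagonal fun i => ((f i : ℝ) : ℂ)) + (Matrix.diagonal fun i => ((g i : ℝ) : ℂ))
      = Matrix.diagonal fun i => (((f + g) i : ℝ) : ℂ) := by
    rw [Matrix.diagonal_add]
    congr 1
    funext i
    push_cast
    simp
  simp only [rep, ← Matrix.add_mul, ← Matrix.mul_add, hd]

lemma rep_sub (h : C.IsHermitian) (f g : Fin n → ℝ) :
    rep h f - rep h g = rep h (f - g) := by
  have hd : (Matrix.diagonal fun i => ((f i : ℝ) : ℂ)) - (Matrix.diagonal fun i => ((g i : ℝ) : ℂ))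
      = Matrix.diagonal fun i => (((f - g) i : ℝ) : ℂ) := by
    rw [Matrix.diagonal_sub]
    congr 1
    funext i
    push_cast
    simp
  simp only [rep, ← Matrix.sub_mul, ← Matrix.mul_sub, hd]

lemma rep_rsmul (h : C.IsHermitian) (r : ℝ) (f : Fin n → ℝ) :
    r • rep h f = rep h (r • f) := by
  have hd : r • (Matrix.diagonal fun i => ((f i : ℝ) : ℂ))
      = Matrix.diagonal fun i => (((r • f) i : ℝ) : ℂ) := by
    ext i j
    by_cases hij : i = j <;>
      simp [Matrix.diagonal_apply, hij, Complex.real_smul]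
  rw [rep, rep, ← hd, mul_smul_comm, smul_mul_assoc]

lemma rep_csmul (h : C.IsHermitian) (r : ℝ) (f : Fin n → ℝ) :
    ((r : ℝ) : ℂ) • rep h f = rep h (r • f) := by
  have hd : ((r : ℝ) : ℂ) • (Matrix.diagonal fun i => ((f i : ℝ) : ℂ))
      = Matrix.diagonal fun i => (((r • f) i : ℝ) : ℂ) := by
    ext i j
    by_cases hij : i = j <;>
      simp [Matrix.diagonal_apply, hij, smul_eq_mul]
  rw [rep, rep, ← hd, mul_smul_comm, smul_mul_assoc]

lemma rep_mul (h : C.IsHermitian) (f g : Fin n → ℝ) :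
    rep h f * rep h g = rep h (f * g) := by
  have hd : (Matrix.diagonal fun i => ((f i : ℝ) : ℂ)) * (Matrix.diagonal fun i => ((g i : ℝ) : ℂ))
      = Matrix.diagonal fun i => (((f * g) i : ℝ) : ℂ) := by
    rw [Matrix.diagonal_mul_diagonal]
    congr 1
    funext i
    push_cast
    simp
  simp only [rep]
  rw [show ∀ X Y Z W V : Matrix (Fin n) (Fin n) ℂ,
      X * Y * Z * (X * W * V) = X * (Y * ((Z * X) * W)) * V from fun _ _ _ _ _ => by
        simp only [Matrix.mul_assoc], UU' h, Matrix.one_mul, hd]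

lemma rep_isHermitian (h : C.IsHermitian) (f : Fin n → ℝ) : (rep h f).IsHermitian := by
  have hd : (Matrix.diagonal (fun i => ((f i : ℝ) : ℂ))).IsHermitian := by
    ext i j
    by_cases hij : i = j <;>
      simp [Matrix.conjTranspose_apply, Matrix.diagonal_apply, hij, Complex.conj_ofReal]
    exact fun hji => absurd hji.symm hij
  have := Matrix.isHermitian_conjTranspose_mul_mul
    ((h.eigenvectorUnitary : Matrix (Fin n) (Fin n) ℂ)ᴴ) hd
  rw [Matrix.conjTranspose_conjTranspose] at this
  exact this

lemma rep_posSemidef (h : C.IsHermitian) (f : Fin n → ℝ) (hf : ∀ i, 0 ≤ f i) :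
    (rep h f).PosSemidef := by
  have hd : (Matrix.diagonal (fun i => ((f i : ℝ) : ℂ))).PosSemidef :=
    Matrix.posSemidef_diagonal_iff.mpr fun i => Complex.zero_le_real.mpr (hf i)
  exact hd.mul_mul_conjTranspose_same _


lemma posDef_conj {n : ℕ} {B T S : Matrix (Fin n) (Fin n) ℂ} (hB : B.PosDef)
    (hT : T.IsHermitian) (hST : S * T = 1) : (T * B * T).PosDef := by
  refine Matrix.PosDef.of_dotProduct_mulVec_pos ?_ ?_
  · have := Matrix.isHermitian_conjTranspose_mul_mul T hB.1
    rwa [hT.eq] at this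
  · intro x hx
    have hTx : T *ᵥ x ≠ 0 := by
      intro h0
      apply hx
      have h1 := congrArg (fun v => S *ᵥ v) h0
      simpa [Matrix.mulVec_mulVec, hST] using h1
    have := hB.dotProduct_mulVec_pos hTx
    have hrw : T * B * T = Tᴴ * B * T := by rw [hT.eq]
    rw [hrw]
    simpa only [Matrix.star_mulVec, Matrix.dotProduct_mulVec, Matrix.vecMul_vecMul] using this

lemma hrpow_isHermitian {n : ℕ} {A : Matrix (Fin n) (Fin n) ℂ} (h : A.IsHermitian) (r : ℝ) :
    (A.hrpow r).IsHermitian := by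
  rw [hrpow_eq h r]; exact rep_isHermitian h _

lemma hrpow_mul_hrpow {n : ℕ} {A : Matrix (Fin n) (Fin n) ℂ} (hA : A.PosDef) (r s : ℝ) :
    A.hrpow r * A.hrpow s = A.hrpow (r + s) := by
  rw [hrpow_eq hA.1 r, hrpow_eq hA.1 s, hrpow_eq hA.1 (r+s), rep_mul]
  refine congrArg (rep hA.1) (funext fun i => ?_)
  simp only [Pi.mul_apply]
  exact (Real.rpow_add (hA.eigenvalues_pos i) r s).symm

lemma hrpow_zero {n : ℕ} {A : Matrix (Fin n) (Fin n) ℂ} (h : A.IsHermitian) :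
    A.hrpow 0 = 1 := by
  rw [hrpow_eq h 0, show (fun i => h.eigenvalues i ^ (0:ℝ)) = fun _ => (1:ℝ) from
    funext fun i => Real.rpow_zero _]
  exact rep_one h

lemma hrpow_one {n : ℕ} {A : Matrix (Fin n) (Fin n) ℂ} (h : A.IsHermitian) :
    A.hrpow 1 = A := by
  rw [hrpow_eq h 1, show (fun i => h.eigenvalues i ^ (1:ℝ)) = h.eigenvalues from
    funext fun i => Real.rpow_one _]
  exact (rep_self h).symm

lemma conj_add {n : ℕ} (S X Y : Matrix (Fin n) (Fin n) ℂ) :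
    S * (X + Y) * S = S * X * S + S * Y * S := by
  rw [Matrix.mul_add, Matrix.add_mul]

lemma conj_sub {n : ℕ} (S X Y : Matrix (Fin n) (Fin n) ℂ) :
    S * (X - Y) * S = S * X * S - S * Y * S := by
  rw [Matrix.mul_sub, Matrix.sub_mul]

lemma conj_csmul {n : ℕ} (c : ℂ) (S X : Matrix (Fin n) (Fin n) ℂ) :
    S * (c • X) * S = c • (S * X * S) := by
  rw [mul_smul_comm, smul_mul_assoc]

lemma conj_rsmul {n : ℕ} (r : ℝ) (S X : Matrix (Fin n) (Fin n) ℂ) :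
    S * (r • X) * S = r • (S * X * S) := by
  rw [mul_smul_comm, smul_mul_assoc]

end Aux

open Aux


lemma scalar_upper {x p : ℝ} (hx : 0 < x) (hp0 : 0 ≤ p) (hp1 : p ≤ 1) :
    (1 - p) + p * x - x ^ p ≤ 2 * max p (1 - p) * (2⁻¹ * (1 + x) - x ^ (1/2 : ℝ)) := by
  rcases le_total p (1/2) with hple | hpge
  · rw [max_eq_right (by linarith)]
    have hc : (0:ℝ) < 2 - 2*p := by linarith
    have am := Real.geom_mean_le_arith_mean2_weighted
      (w₁ := 1/(2-2*p)) (w₂ := (1-2*p)/(2-2*p)) (p₁ := x^p) (p₂ := x)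
      (by positivity) (div_nonneg (by linarith) hc.le)
      (Real.rpow_nonneg hx.le p) hx.le
      (by rw [← add_div, div_eq_one_iff_eq hc.ne']; ring)
    have lhs_eq : (x^p)^(1/(2-2*p)) * x^((1-2*p)/(2-2*p)) = x^(1/2 : ℝ) := by
      rw [← Real.rpow_mul hx.le, ← Real.rpow_add hx]
      congr 1
      have hp1' : (1:ℝ) - p ≠ 0 := by linarith
      field_simp
      try ring
    rw [lhs_eq] at am
    have h2 : (2-2*p) * (1/(2-2*p) * x^p + (1-2*p)/(2-2*p) * x) = x^p + (1-2*p)*x := by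
      have hp1' : (1:ℝ) - p ≠ 0 := by linarith
      field_simp
      try ring
    have key : (2-2*p) * x^(1/2:ℝ) ≤ x^p + (1-2*p)*x := by
      have := mul_le_mul_of_nonneg_left am hc.le
      linarith [this.trans_eq h2]
    nlinarith [key]
  · rw [max_eq_left (by linarith)]
    have hc : (0:ℝ) < 2*p := by linarith
    have am := Real.geom_mean_le_arith_mean2_weighted
      (w₁ := 1/(2*p)) (w₂ := (2*p-1)/(2*p)) (p₁ := x^p) (p₂ := 1)
      (by positivity) (div_nonneg (by linarith) hc.le)
      (Real.rpow_nonneg hx.le p) zero_le_one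
      (by rw [← add_div, div_eq_one_iff_eq hc.ne']; ring)
    have lhs_eq : (x^p)^(1/(2*p)) * (1:ℝ)^((2*p-1)/(2*p)) = x^(1/2 : ℝ) := by
      rw [Real.one_rpow, mul_one, ← Real.rpow_mul hx.le]
      congr 1
      field_simp
      try ring
    rw [lhs_eq] at am
    have h2 : (2*p) * (1/(2*p) * x^p + (2*p-1)/(2*p) * 1) = x^p + (2*p-1) := by
      field_simp
      try ring
    have key : (2*p) * x^(1/2:ℝ) ≤ x^p + (2*p-1) := by
      have := mul_le_mul_of_nonneg_left am hc.le
      linarith [this.trans_eq h2]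
    nlinarith [key]

lemma scalar_lower {x p : ℝ} (hx : 0 < x) (hp0 : 0 ≤ p) (hp1 : p ≤ 1) :
    2 * min p (1 - p) * (2⁻¹ * (1 + x) - x ^ (1/2 : ℝ)) ≤ (1 - p) + p * x - x ^ p := by
  rcases le_total p (1/2) with hple | hpge
  · rw [min_eq_left (by linarith)]
    have am := Real.geom_mean_le_arith_mean2_weighted
      (w₁ := 1-2*p) (w₂ := 2*p) (p₁ := 1) (p₂ := x^(1/2:ℝ))
      (by linarith) (by linarith) zero_le_one (Real.rpow_nonneg hx.le _)
      (by ring)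
    have lhs_eq : (1:ℝ)^(1-2*p) * (x^(1/2:ℝ))^(2*p) = x^p := by
      rw [Real.one_rpow, one_mul, ← Real.rpow_mul hx.le]
      congr 1
      ring
    rw [lhs_eq] at am
    nlinarith [am]
  · rw [min_eq_right (by linarith)]
    have am := Real.geom_mean_le_arith_mean2_weighted
      (w₁ := 2*p-1) (w₂ := 2-2*p) (p₁ := x) (p₂ := x^(1/2:ℝ))
      (by linarith) (by linarith) hx.le (Real.rpow_nonneg hx.le _)
      (by ring)
    have lhs_eq : x^(2*p-1) * (x^(1/2:ℝ))^(2-2*p) = x^p := by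
      rw [← Real.rpow_mul hx.le, ← Real.rpow_add hx]
      congr 1
      ring
    rw [lhs_eq] at am
    nlinarith [am]

theorem stmt_18 {n : ℕ} (A B : Matrix (Fin n) (Fin n) ℂ)
    (hA : A.PosDef) (hB : B.PosDef) {p : ℝ} (hp : p ∈ Set.Icc (0:ℝ) 1) :
    ((2 * max p (1 - p) : ℝ) •
        (((2 : ℂ)⁻¹ • (A + B)) - A.gmean B (1/2)) -
      ((((1 - p : ℝ) : ℂ) • A + ((p : ℝ) : ℂ) • B) - A.gmean B p)).PosSemidef ∧
    (((((1 - p : ℝ) : ℂ) • A + ((p : ℝ) : ℂ) • B) - A.gmean B p) -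
      (2 * min p (1 - p) : ℝ) •
        (((2 : ℂ)⁻¹ • (A + B)) - A.gmean B (1/2))).PosSemidef := by
  obtain ⟨hp0, hp1⟩ := hp
  set S := A.hrpow (1/2) with hSdef
  set T := A.hrpow (-(1/2)) with hTdef
  have hS : S.IsHermitian := hrpow_isHermitian hA.1 _
  have hT : T.IsHermitian := hrpow_isHermitian hA.1 _
  have hST : S * T = 1 := by
    rw [hSdef, hTdef, hrpow_mul_hrpow hA, show (1/2 + -(1/2) : ℝ) = 0 by norm_num,
      hrpow_zero hA.1]
  have hTS : T * S = 1 := by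
    rw [hSdef, hTdef, hrpow_mul_hrpow hA, show (-(1/2) + 1/2 : ℝ) = 0 by norm_num,
      hrpow_zero hA.1]
  have hSS : S * S = A := by
    rw [hSdef, hrpow_mul_hrpow hA, show (1/2 + 1/2 : ℝ) = 1 by norm_num, hrpow_one hA.1]
  set C := T * B * T with hCdef
  have hCpd : C.PosDef := posDef_conj hB hT hST
  have h : C.IsHermitian := hCpd.1
  set lam := h.eigenvalues with hlamdef
  have hlam : ∀ i, 0 < lam i := fun i => hCpd.eigenvalues_pos i
  have hgm : ∀ ν : ℝ, A.gmean B ν = S * C.hrpow ν * S := fun ν => rfl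
  have hrpC : ∀ r : ℝ, C.hrpow r = rep h (fun i => lam i ^ r) := fun r => hrpow_eq h r
  have hA_rep : A = S * rep h (fun _ => 1) * S := by rw [rep_one h, Matrix.mul_one, hSS]
  have hB_rep : B = S * rep h lam * S := by
    rw [← rep_self h, hCdef]
    have e : S * (T * B * T) * S = (S * T) * B * (T * S) := by
      simp only [Matrix.mul_assoc]
    rw [e, hST, hTS, Matrix.one_mul, Matrix.mul_one]
  have h2inv : ((2 : ℂ)⁻¹) = (((2⁻¹ : ℝ)) : ℂ) := by norm_num
  have combo1 : ∀ g₁ : Fin n → ℝ,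
      (∀ i, g₁ i = (2 * max p (1-p)) * (2⁻¹ * (1 + lam i) - lam i ^ (1/2:ℝ))
        - ((1-p) + p * lam i - lam i ^ p)) →
      rep h g₁ =
        (2 * max p (1 - p) : ℝ) •
          ((((2⁻¹:ℝ)):ℂ) • (rep h (fun _ => 1) + rep h lam) - rep h (fun i => lam i ^ (1/2:ℝ)))
        - ((((1 - p : ℝ)):ℂ) • rep h (fun _ => 1) + (((p : ℝ)):ℂ) • rep h lam
            - rep h (fun i => lam i ^ p)) := by
    intro g₁ hg₁
    simp only [rep_add, rep_csmul, rep_rsmul, rep_sub]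
    refine congrArg (rep h) (funext fun i => ?_)
    simp only [Pi.add_apply, Pi.sub_apply, Pi.smul_apply, smul_eq_mul]
    rw [hg₁ i]
    ring
  have combo2 : ∀ g₂ : Fin n → ℝ,
      (∀ i, g₂ i = ((1-p) + p * lam i - lam i ^ p)
        - (2 * min p (1-p)) * (2⁻¹ * (1 + lam i) - lam i ^ (1/2:ℝ))) →
      rep h g₂ =
        ((((1 - p : ℝ)):ℂ) • rep h (fun _ => 1) + (((p : ℝ)):ℂ) • rep h lam
            - rep h (fun i => lam i ^ p))
        - (2 * min p (1 - p) : ℝ) •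
          ((((2⁻¹:ℝ)):ℂ) • (rep h (fun _ => 1) + rep h lam)
            - rep h (fun i => lam i ^ (1/2:ℝ))) := by
    intro g₂ hg₂
    simp only [rep_add, rep_csmul, rep_rsmul, rep_sub]
    refine congrArg (rep h) (funext fun i => ?_)
    simp only [Pi.add_apply, Pi.sub_apply, Pi.smul_apply, smul_eq_mul]
    rw [hg₂ i]
    ring
  have key : ∀ g₁ : Fin n → ℝ,
      (∀ i, g₁ i = (2 * max p (1-p)) * (2⁻¹ * (1 + lam i) - lam i ^ (1/2:ℝ))
        - ((1-p) + p * lam i - lam i ^ p)) →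
      (2 * max p (1 - p) : ℝ) •
        (((2 : ℂ)⁻¹ • (A + B)) - A.gmean B (1/2)) -
        ((((1 - p : ℝ) : ℂ) • A + ((p : ℝ) : ℂ) • B) - A.gmean B p) = S * rep h g₁ * S := by
    intro g₁ hg₁
    rw [hgm, hgm, hrpC, hrpC, h2inv, hA_rep, hB_rep, combo1 g₁ hg₁]
    simp only [conj_sub, conj_add, conj_csmul, conj_rsmul]
  have key2 : ∀ g₂ : Fin n → ℝ,
      (∀ i, g₂ i = ((1-p) + p * lam i - lam i ^ p)
        - (2 * min p (1-p)) * (2⁻¹ * (1 + lam i) - lam i ^ (1/2:ℝ))) →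
      ((((1 - p : ℝ) : ℂ) • A + ((p : ℝ) : ℂ) • B) - A.gmean B p) -
        (2 * min p (1 - p) : ℝ) •
        (((2 : ℂ)⁻¹ • (A + B)) - A.gmean B (1/2)) = S * rep h g₂ * S := by
    intro g₂ hg₂
    rw [hgm, hgm, hrpC, hrpC, h2inv, hA_rep, hB_rep, combo2 g₂ hg₂]
    simp only [conj_sub, conj_add, conj_csmul, conj_rsmul]
  constructor
  · rw [key (fun i => (2 * max p (1-p)) * (2⁻¹ * (1 + lam i) - lam i ^ (1/2:ℝ))
        - ((1-p) + p * lam i - lam i ^ p)) (fun i => rfl)]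
    have hpsd := rep_posSemidef h (fun i => (2 * max p (1-p)) * (2⁻¹ * (1 + lam i)
        - lam i ^ (1/2:ℝ)) - ((1-p) + p * lam i - lam i ^ p)) (fun i => by
      have := scalar_upper (x := lam i) (p := p) (hlam i) hp0 hp1
      linarith)
    have := hpsd.conjTranspose_mul_mul_same S
    rwa [hS.eq] at this
  · rw [key2 (fun i => ((1-p) + p * lam i - lam i ^ p)
        - (2 * min p (1-p)) * (2⁻¹ * (1 + lam i) - lam i ^ (1/2:ℝ))) (fun i => rfl)]
    have hpsd := rep_posSemidef h (fun i => ((1-p) + p * lam i - lam i ^ p)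
        - (2 * min p (1-p)) * (2⁻¹ * (1 + lam i) - lam i ^ (1/2:ℝ))) (fun i => by
      have := scalar_lower (x := lam i) (p := p) (hlam i) hp0 hp1
      linarith)
    have := hpsd.conjTranspose_mul_mul_same S
    rwa [hS.eq] at this
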